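/- Let n ≥ 1 and let A : ℝ × ℝⁿ → ℝⁿ and V : ℝ × ℝⁿ → ℝ be twice continuously differentiable. Define F^a(t,x,v) = Σ_b (∂A^b/∂x^a − ∂A^a/∂x^b)(t,x) v^b − ∂V/∂x^a(t,x) − ∂A^a/∂t(t,x) and Γ^a_b(t,x) = (1/2)(∂A^a/∂x^b − ∂A^b/∂x^a)(t,x). Then the Jacobi endomorphism Φ^a_c(t,x,v) := −∂F^a/∂x^c(t,x,v) − Σ_b Γ^a_b(t,x) Γ^b_c(t,x) − (∂Γ^a_c/∂t(t,x) + Σ_b v^b ∂Γ^a_c/∂x^b(t,x)) is symmetric: Φ^a_c(t,x,v) = Φ^c_a(t,x,v) for all (t,x,v). -/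

import Mathlib

section Helpers

variable {E : Type*} [NormedAddCommGroup E] [NormedSpace ℝ E]

lemma hasFDerivAt_fderiv_apply (f : E → ℝ) (hf : ContDiff ℝ 2 f) (w : E) (q : E) :
    HasFDerivAt (fun p => fderiv ℝ f p w)
      ((ContinuousLinearMap.apply ℝ ℝ w).comp (fderiv ℝ (fderiv ℝ f) q)) q := by
  have h1 : ContDiff ℝ 1 (fderiv ℝ f) := hf.fderiv_right (by norm_num)
  exact (ContinuousLinearMap.apply ℝ ℝ w).hasFDerivAt.comp q
    ((h1.differentiable (by norm_num) q).hasFDerivAt)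

lemma sym2 (f : E → ℝ) (hf : ContDiff ℝ 2 f) (q u w : E) :
    fderiv ℝ (fderiv ℝ f) q u w = fderiv ℝ (fderiv ℝ f) q w u :=
  (hf.contDiffAt.isSymmSndFDerivAt (by simp [minSmoothness_of_isRCLikeNormedField])) u w

end Helpers

theorem jacobi_endomorphism_symmetric
    (n : ℕ) (hn : 1 ≤ n)
    (A : ℝ × (Fin n → ℝ) → (Fin n → ℝ)) (V : ℝ × (Fin n → ℝ) → ℝ)
    (hA : ContDiff ℝ 2 A) (hV : ContDiff ℝ 2 V)
    (F : ℝ × (Fin n → ℝ) × (Fin n → ℝ) → (Fin n → ℝ))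
    (hF : ∀ (t : ℝ) (x v : Fin n → ℝ) (a : Fin n),
      F (t, x, v) a =
        ∑ b, (fderiv ℝ (fun p : ℝ × (Fin n → ℝ) => A p b) (t, x) (0, Pi.single a 1)
              - fderiv ℝ (fun p : ℝ × (Fin n → ℝ) => A p a) (t, x) (0, Pi.single b 1)) * v b
        - fderiv ℝ V (t, x) (0, Pi.single a 1)
        - fderiv ℝ (fun p : ℝ × (Fin n → ℝ) => A p a) (t, x) (1, 0))
    (Γ : ℝ × (Fin n → ℝ) → Matrix (Fin n) (Fin n) ℝ)
    (hΓ : ∀ (t : ℝ) (x : Fin n → ℝ) (a b : Fin n),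
      Γ (t, x) a b =
        (1/2) * (fderiv ℝ (fun p : ℝ × (Fin n → ℝ) => A p a) (t, x) (0, Pi.single b 1)
               - fderiv ℝ (fun p : ℝ × (Fin n → ℝ) => A p b) (t, x) (0, Pi.single a 1)))
    (Φ : ℝ × (Fin n → ℝ) × (Fin n → ℝ) → Matrix (Fin n) (Fin n) ℝ)
    (hΦ : ∀ (t : ℝ) (x v : Fin n → ℝ) (a c : Fin n),
      Φ (t, x, v) a c =
        - fderiv ℝ (fun p : ℝ × (Fin n → ℝ) × (Fin n → ℝ) => F p a) (t, x, v)
            (0, Pi.single c 1, 0)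
        - ∑ b, Γ (t, x) a b * Γ (t, x) b c
        - (fderiv ℝ (fun p : ℝ × (Fin n → ℝ) => Γ p a c) (t, x) (1, 0)
           + ∑ b, v b * fderiv ℝ (fun p : ℝ × (Fin n → ℝ) => Γ p a c) (t, x)
               (0, Pi.single b 1))) :
    ∀ (t : ℝ) (x v : Fin n → ℝ) (a c : Fin n),
      Φ (t, x, v) a c = Φ (t, x, v) c a := by
  intro t x v a c
  have hf : ∀ b : Fin n, ContDiff ℝ 2 (fun p : ℝ × (Fin n → ℝ) => A p b) :=
    fun b => contDiff_pi.mp hA b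
  set d1 : ℝ × (Fin n → ℝ) := (1, 0) with hd1
  set dx : Fin n → ℝ × (Fin n → ℝ) := fun b => (0, Pi.single b 1) with hdx
  set H : (ℝ × (Fin n → ℝ) → ℝ) → (ℝ × (Fin n → ℝ)) → (ℝ × (Fin n → ℝ)) → ℝ :=
    fun g u w => fderiv ℝ (fderiv ℝ g) (t, x) u w with hH
  have sum_eq : ∀ (f g : Fin n → ℝ), (∀ b, f b = g b) → ∑ b, f b = ∑ b, g b :=
    fun f g h => Finset.sum_congr rfl (fun b _ => h b)
  -- derivative of Γ components
  have hdΓ : ∀ (a c : Fin n) (u : ℝ × (Fin n → ℝ)),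
      fderiv ℝ (fun p : ℝ × (Fin n → ℝ) => Γ p a c) (t, x) u
        = (1/2) * (H (fun p => A p a) u (dx c) - H (fun p => A p c) u (dx a)) := by
    intro a c u
    have hfun : (fun p : ℝ × (Fin n → ℝ) => Γ p a c)
        = fun p : ℝ × (Fin n → ℝ) =>
            (1/2) * (fderiv ℝ (fun q : ℝ × (Fin n → ℝ) => A q a) p (0, Pi.single c 1)
            - fderiv ℝ (fun q : ℝ × (Fin n → ℝ) => A q c) p (0, Pi.single a 1)) :=
      funext fun p => hΓ p.1 p.2 a c
    have hd := (((hasFDerivAt_fderiv_apply _ (hf a) (dx c) (t, x)).fun_sub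
        (hasFDerivAt_fderiv_apply _ (hf c) (dx a) (t, x))).const_mul (1/2 : ℝ))
    rw [hfun, hd.fderiv]
    simp [H, dx]
  -- derivative of F components
  have hdF : ∀ (a c : Fin n),
      fderiv ℝ (fun p : ℝ × (Fin n → ℝ) × (Fin n → ℝ) => F p a) (t, x, v)
          (0, Pi.single c 1, 0)
        = ∑ b, (v b * H (fun p => A p b) (dx c) (dx a)
              - v b * H (fun p => A p a) (dx c) (dx b))
          - H V (dx c) (dx a) - H (fun p => A p a) (dx c) d1 := by
    intro a c
    have hfun : (fun p : ℝ × (Fin n → ℝ) × (Fin n → ℝ) => F p a)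
        = fun p : ℝ × (Fin n → ℝ) × (Fin n → ℝ) =>
            ∑ b, (fderiv ℝ (fun q : ℝ × (Fin n → ℝ) => A q b) (p.1, p.2.1) (0, Pi.single a 1)
              - fderiv ℝ (fun q : ℝ × (Fin n → ℝ) => A q a) (p.1, p.2.1) (0, Pi.single b 1))
                * p.2.2 b
            - fderiv ℝ V (p.1, p.2.1) (0, Pi.single a 1)
            - fderiv ℝ (fun q : ℝ × (Fin n → ℝ) => A q a) (p.1, p.2.1) (1, 0) :=
      funext fun p => hF p.1 p.2.1 p.2.2 a
    set π : (ℝ × (Fin n → ℝ) × (Fin n → ℝ)) →L[ℝ] (ℝ × (Fin n → ℝ)) :=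
      (ContinuousLinearMap.fst ℝ ℝ ((Fin n → ℝ) × (Fin n → ℝ))).prod
        ((ContinuousLinearMap.fst ℝ (Fin n → ℝ) (Fin n → ℝ)).comp
          (ContinuousLinearMap.snd ℝ ℝ ((Fin n → ℝ) × (Fin n → ℝ)))) with hπdef
    have hπ : HasFDerivAt (fun p : ℝ × (Fin n → ℝ) × (Fin n → ℝ) => ((p.1, p.2.1) : ℝ × (Fin n → ℝ)))
        π (t, x, v) := π.hasFDerivAt
    have hcomp : ∀ (g : ℝ × (Fin n → ℝ) → ℝ) (hg : ContDiff ℝ 2 g) (w : ℝ × (Fin n → ℝ)),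
        HasFDerivAt (fun p : ℝ × (Fin n → ℝ) × (Fin n → ℝ) => fderiv ℝ g (p.1, p.2.1) w)
          (((ContinuousLinearMap.apply ℝ ℝ w).comp (fderiv ℝ (fderiv ℝ g) (t, x))).comp π)
          (t, x, v) := fun g hg w =>
      (hasFDerivAt_fderiv_apply g hg w (t, x)).comp (g := fun q => fderiv ℝ g q w) (t, x, v) hπ
    set prj : Fin n → ((ℝ × (Fin n → ℝ) × (Fin n → ℝ)) →L[ℝ] ℝ) := fun b =>
      (ContinuousLinearMap.proj b).comp
        ((ContinuousLinearMap.snd ℝ (Fin n → ℝ) (Fin n → ℝ)).comp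
          (ContinuousLinearMap.snd ℝ ℝ ((Fin n → ℝ) × (Fin n → ℝ)))) with hprjdef
    have hprj : ∀ b, HasFDerivAt (fun p : ℝ × (Fin n → ℝ) × (Fin n → ℝ) => p.2.2 b)
        (prj b) (t, x, v) := fun b => (prj b).hasFDerivAt
    have hd := ((HasFDerivAt.fun_sum (fun b (_ : b ∈ Finset.univ) =>
        (((hcomp _ (hf b) (dx a)).fun_sub (hcomp _ (hf a) (dx b))).fun_mul (hprj b)))).fun_sub
          (hcomp V hV (dx a))).fun_sub (hcomp _ (hf a) d1)
    rw [hfun, hd.fderiv]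
    have hπu : π (0, Pi.single c 1, 0) = dx c := rfl
    have hprju : ∀ b, prj b (0, Pi.single c 1, 0) = 0 := fun b => rfl
    simp only [ContinuousLinearMap.sub_apply, ContinuousLinearMap.sum_apply,
      ContinuousLinearMap.add_apply, ContinuousLinearMap.smul_apply,
      ContinuousLinearMap.comp_apply, ContinuousLinearMap.apply_apply, hπu, hprju,
      smul_eq_mul, mul_zero, zero_add, H]
    simp only [mul_sub]
  -- symmetry of second derivatives
  have hsymA : ∀ (b : Fin n) (u w : ℝ × (Fin n → ℝ)),
      H (fun p => A p b) u w = H (fun p => A p b) w u :=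
    fun b => sym2 _ (hf b) (t, x)
  have hsymV : ∀ u w : ℝ × (Fin n → ℝ), H V u w = H V w u := sym2 V hV (t, x)
  -- skewness and symmetry of Γ·Γ
  have hGsym : ∀ a c : Fin n,
      ∑ b, Γ (t, x) a b * Γ (t, x) b c = ∑ b, Γ (t, x) c b * Γ (t, x) b a :=
    fun a c => sum_eq _ _ fun b => by rw [hΓ t x a b, hΓ t x b c, hΓ t x c b, hΓ t x b a]; ring
  -- canonical closed form for Φ
  have key : ∀ a c : Fin n, Φ (t, x, v) a c =
      ∑ b, v b * (- H (fun p => A p b) (dx a) (dx c)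
          + (1/2) * H (fun p => A p a) (dx b) (dx c)
          + (1/2) * H (fun p => A p c) (dx b) (dx a))
        + H V (dx a) (dx c)
        + (1/2) * H (fun p => A p a) d1 (dx c) + (1/2) * H (fun p => A p c) d1 (dx a)
        - ∑ b, Γ (t, x) a b * Γ (t, x) b c := by
    intro a c
    have hS : (∑ b, v b * (- H (fun p => A p b) (dx a) (dx c)
          + (1/2) * H (fun p => A p a) (dx b) (dx c)
          + (1/2) * H (fun p => A p c) (dx b) (dx a)))
        = -(∑ b, (v b * H (fun p => A p b) (dx c) (dx a)
              - v b * H (fun p => A p a) (dx c) (dx b)))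
          - ∑ b, v b * ((1/2) * (H (fun p => A p a) (dx b) (dx c)
              - H (fun p => A p c) (dx b) (dx a))) := by
      rw [← Finset.sum_neg_distrib, ← Finset.sum_sub_distrib]
      refine sum_eq _ _ fun b => ?_
      rw [hsymA b (dx c) (dx a), hsymA a (dx c) (dx b)]
      ring
    rw [hΦ t x v a c, hdF a c, hdΓ a c d1]
    simp only [hdΓ a c]
    rw [hS, hsymV (dx c) (dx a), hsymA a (dx c) d1]
    ring
  rw [key a c, key c a, hGsym a c, hsymV (dx a) (dx c),
    sum_eq _ _ (fun b => by rw [hsymA b (dx a) (dx c)]; ring :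
      ∀ b : Fin n, v b * (- H (fun p => A p b) (dx a) (dx c)
          + (1/2) * H (fun p => A p a) (dx b) (dx c)
          + (1/2) * H (fun p => A p c) (dx b) (dx a))
        = v b * (- H (fun p => A p b) (dx c) (dx a)
          + (1/2) * H (fun p => A p c) (dx b) (dx a)
          + (1/2) * H (fun p => A p a) (dx b) (dx c)))]
  ring
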